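/- The orbit space X(ℝ)/ℤ₂⁴ of the canonical ℤ₂⁴-action on the real Grassmann manifold G₄,₂(ℝ) (realized as the real Plücker quadric X(ℝ)) is homeomorphic to the 4-dimensional sphere S⁴, i.e. to the unit sphere {x ∈ ℝ⁵ : ‖x‖ = 1}. -/

import Mathlib

/-- Proportionality of nonzero vectors of `ℝ⁶`: the relation defining `ℝP⁵`. -/
def projRelR (x y : {w : Fin 6 → ℝ // w ≠ 0}) : Prop :=
  ∃ c : ℝ, c ≠ 0 ∧ (fun k => c * x.1 k) = y.1

/-- `ℝP⁵`, with the quotient topology. -/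
abbrev RP5 := Quot projRelR

/-- The real Plücker quadric `X(ℝ) = {[w] ∈ ℝP⁵ : w₀w₅ + w₂w₃ = w₁w₄}`, i.e. the real
Grassmannian `G₄,₂(ℝ)` under the Plücker embedding, with the subspace topology. -/
def realPluckerQuadric : Set RP5 :=
  {p | ∃ w : {w : Fin 6 → ℝ // w ≠ 0}, Quot.mk projRelR w = p ∧
        w.1 0 * w.1 5 + w.1 2 * w.1 3 = w.1 1 * w.1 4}

/-- The weights of the `ℤ₂⁴`-action on `ℝP⁵` coming from the second symmetric power:
`ε·[w] = [ε₁ε₂w₀ : ε₁ε₃w₁ : ε₁ε₄w₂ : ε₂ε₃w₃ : ε₂ε₄w₄ : ε₃ε₄w₅]`. -/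
def signCoef (ε : Fin 4 → ℝ) : Fin 6 → ℝ :=
  ![ε 0 * ε 1, ε 0 * ε 2, ε 0 * ε 3, ε 1 * ε 2, ε 1 * ε 3, ε 2 * ε 3]

/-- Two points of `X(ℝ)` lie in the same orbit of the group `ℤ₂⁴ = {−1,1}⁴`. -/
def realOrbitRel (p q : ↥realPluckerQuadric) : Prop :=
  ∃ ε : Fin 4 → ℝ, (∀ i, ε i = 1 ∨ ε i = -1) ∧
    ∃ w w' : {w : Fin 6 → ℝ // w ≠ 0},
      Quot.mk projRelR w = p.1 ∧ Quot.mk projRelR w' = q.1 ∧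
      ∀ k : Fin 6, w'.1 k = signCoef ε k * w.1 k


noncomputable section

namespace RG

lemma sq_one_cases {d : ℝ} (h : d ^ 2 = 1) : d = 1 ∨ d = -1 := by
  have : (d - 1) * (d + 1) = 0 := by linear_combination h
  rcases mul_eq_zero.mp this with h' | h'
  · left; linarith
  · right; linarith

lemma cases_sq {d : ℝ} (h : d = 1 ∨ d = -1) : d ^ 2 = 1 := by
  rcases h with h | h <;> rw [h] <;> norm_num

/-- from equal squares and zero product both are zero -/
lemma eq_of_eq_neg_nonneg {x y : ℝ} (hx : 0 ≤ x) (hy : 0 ≤ y) (h : x = -y) : x = y := by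
  linarith

lemma pair_zero {x y : ℝ} (h1 : x ^ 2 = y ^ 2) (h2 : x * y = 0) : x = 0 ∧ y = 0 := by
  have hx : x ^ 4 = 0 := by linear_combination x ^ 2 * h1 + x * y * h2
  have hx0 : x = 0 := by
    have := pow_eq_zero_iff (n := 4) (by norm_num) |>.mp hx
    exact this
  constructor
  · exact hx0
  · have : y ^ 2 = 0 := by rw [← h1, hx0]; ring
    exact pow_eq_zero_iff (n := 2) (by norm_num) |>.mp this

lemma pair_signs {x y x' y' η : ℝ} (hη : η = 1 ∨ η = -1)
    (hx : x ^ 2 = x' ^ 2) (hy : y ^ 2 = y' ^ 2) (hxy : x * y = η * (x' * y')) :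
    ∃ d₁ d₂ : ℝ, (d₁ = 1 ∨ d₁ = -1) ∧ (d₂ = 1 ∨ d₂ = -1) ∧ d₁ * d₂ = η ∧
      x' = d₁ * x ∧ y' = d₂ * y := by
  have hη2 : η ^ 2 = 1 := cases_sq hη
  by_cases hx0 : x = 0
  · have hx'0 : x' = 0 := by
      have : x' ^ 2 = 0 := by rw [← hx, hx0]; ring
      exact pow_eq_zero_iff (n := 2) (by norm_num) |>.mp this
    by_cases hy0 : y = 0
    · have hy'0 : y' = 0 := by
        have : y' ^ 2 = 0 := by rw [← hy, hy0]; ring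
        exact pow_eq_zero_iff (n := 2) (by norm_num) |>.mp this
      exact ⟨η, 1, hη, Or.inl rfl, by ring, by rw [hx'0, hx0]; ring, by rw [hy'0, hy0]; ring⟩
    · have hd2 : (y' / y) ^ 2 = 1 := by field_simp; linarith [hy]
      refine ⟨η * (y' / y), y' / y, ?_, sq_one_cases hd2, ?_, ?_, ?_⟩
      · rcases sq_one_cases hd2 with h | h <;> rcases hη with h' | h' <;> rw [h, h'] <;> norm_num
      · linear_combination η * hd2
      · rw [hx'0, hx0]; ring
      · field_simp
  · by_cases hy0 : y = 0
    · have hy'0 : y' = 0 := by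
        have : y' ^ 2 = 0 := by rw [← hy, hy0]; ring
        exact pow_eq_zero_iff (n := 2) (by norm_num) |>.mp this
      have hd1 : (x' / x) ^ 2 = 1 := by field_simp; linarith [hx]
      refine ⟨x' / x, η * (x' / x), sq_one_cases hd1, ?_, ?_, ?_, ?_⟩
      · rcases sq_one_cases hd1 with h | h <;> rcases hη with h' | h' <;> rw [h, h'] <;> norm_num
      · linear_combination η * hd1
      · field_simp
      · rw [hy'0, hy0]; ring
    · have hd1 : (x' / x) ^ 2 = 1 := by field_simp; linarith [hx]
      have hd2 : (y' / y) ^ 2 = 1 := by field_simp; linarith [hy]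
      have hx'y' : x' * y' = η * (x * y) := by
        linear_combination -(η * hxy) - (x' * y') * hη2
      refine ⟨x' / x, y' / y, sq_one_cases hd1, sq_one_cases hd2, ?_, ?_, ?_⟩
      · field_simp
        first
        | linear_combination hx'y'
        | linear_combination -hx'y'
        | linear_combination 2 * hx'y'
        | linear_combination (-2 : ℝ) * hx'y'
      · field_simp
      · field_simp

lemma signCoef_0 (ε : Fin 4 → ℝ) : signCoef ε 0 = ε 0 * ε 1 := rfl
lemma signCoef_1 (ε : Fin 4 → ℝ) : signCoef ε 1 = ε 0 * ε 2 := rfl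
lemma signCoef_2 (ε : Fin 4 → ℝ) : signCoef ε 2 = ε 0 * ε 3 := rfl
lemma signCoef_3 (ε : Fin 4 → ℝ) : signCoef ε 3 = ε 1 * ε 2 := rfl
lemma signCoef_4 (ε : Fin 4 → ℝ) : signCoef ε 4 = ε 1 * ε 3 := rfl
lemma signCoef_5 (ε : Fin 4 → ℝ) : signCoef ε 5 = ε 2 * ε 3 := rfl

/-- realize an admissible sign pattern via `signCoef` up to global sign -/
lemma sigma_realize (δ : Fin 6 → ℝ) (hd : ∀ k, δ k = 1 ∨ δ k = -1)
    (h14 : δ 0 * δ 5 = δ 1 * δ 4) (h23 : δ 0 * δ 5 = δ 2 * δ 3) :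
    ∃ ε : Fin 4 → ℝ, (∀ i, ε i = 1 ∨ ε i = -1) ∧
      ((∀ k, δ k = signCoef ε k) ∨ (∀ k, δ k = -signCoef ε k)) := by
  have hsq : ∀ k, δ k ^ 2 = 1 := fun k => cases_sq (hd k)
  by_cases H : δ 0 * δ 1 * δ 2 = δ 0 * δ 5
  · refine ⟨![1, δ 0, δ 1, δ 2], ?_, Or.inl ?_⟩
    · intro i; fin_cases i
      · exact Or.inl rfl
      · exact hd 0
      · exact hd 1
      · exact hd 2
    · intro k; fin_cases k <;>
        simp [signCoef, Matrix.cons_val_succ]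
      · -- δ 3 = δ 0 * δ 1
        linear_combination (-(δ 2)) * H + (-(δ 2)) * h23 + (δ 0 * δ 1 - δ 3) * hsq 2
      · -- δ 4 = δ 0 * δ 2
        linear_combination (-(δ 1)) * H + (-(δ 1)) * h14 + (δ 0 * δ 2 - δ 4) * hsq 1
      · -- δ 5 = δ 1 * δ 2
        show δ 5 = δ 1 * δ 2
        linear_combination (-(δ 0)) * H + (δ 1 * δ 2 - δ 5) * hsq 0
  · have H' : δ 0 * δ 1 * δ 2 = -(δ 0 * δ 5) := by
      rcases hd 0 with h0 | h0 <;> rcases hd 1 with h1 | h1 <;> rcases hd 2 with h2 | h2 <;>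
        rcases hd 5 with h5 | h5 <;> rw [h0, h1, h2, h5] at H ⊢ <;> norm_num at H <;> norm_num
    refine ⟨![1, -δ 0, -δ 1, -δ 2], ?_, Or.inr ?_⟩
    · intro i; fin_cases i
      · exact Or.inl rfl
      · rcases hd 0 with h | h <;> rw [h] <;> norm_num
      · rcases hd 1 with h | h <;> rw [h] <;> norm_num
      · rcases hd 2 with h | h <;> rw [h] <;> norm_num
    · intro k; fin_cases k <;>
        simp [signCoef, Matrix.cons_val_succ]
      · linear_combination δ 2 * H' - δ 2 * h23 - (δ 0 * δ 1 + δ 3) * hsq 2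
      · linear_combination δ 1 * H' - δ 1 * h14 - (δ 0 * δ 2 + δ 4) * hsq 1
      · show δ 5 = -(δ 1 * δ 2)
        linear_combination δ 0 * H' - (δ 1 * δ 2 + δ 5) * hsq 0


def r2 (w : Fin 6 → ℝ) : ℝ :=
  w 0 ^ 2 + w 1 ^ 2 + w 2 ^ 2 + w 3 ^ 2 + w 4 ^ 2 + w 5 ^ 2

lemma r2_nonneg (w : Fin 6 → ℝ) : 0 ≤ r2 w := by unfold r2; positivity

lemma r2_pos (w : Fin 6 → ℝ) (hw : w ≠ 0) : 0 < r2 w := by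
  rcases (r2_nonneg w).lt_or_eq with h | h
  · exact h
  · exfalso
    apply hw
    have h' := h.symm
    unfold r2 at h'
    have e0 : w 0 = 0 := by nlinarith [sq_nonneg (w 0), sq_nonneg (w 1), sq_nonneg (w 2), sq_nonneg (w 3), sq_nonneg (w 4), sq_nonneg (w 5)]
    have e1 : w 1 = 0 := by nlinarith [sq_nonneg (w 0), sq_nonneg (w 1), sq_nonneg (w 2), sq_nonneg (w 3), sq_nonneg (w 4), sq_nonneg (w 5)]
    have e2 : w 2 = 0 := by nlinarith [sq_nonneg (w 0), sq_nonneg (w 1), sq_nonneg (w 2), sq_nonneg (w 3), sq_nonneg (w 4), sq_nonneg (w 5)]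
    have e3 : w 3 = 0 := by nlinarith [sq_nonneg (w 0), sq_nonneg (w 1), sq_nonneg (w 2), sq_nonneg (w 3), sq_nonneg (w 4), sq_nonneg (w 5)]
    have e4 : w 4 = 0 := by nlinarith [sq_nonneg (w 0), sq_nonneg (w 1), sq_nonneg (w 2), sq_nonneg (w 3), sq_nonneg (w 4), sq_nonneg (w 5)]
    have e5 : w 5 = 0 := by nlinarith [sq_nonneg (w 0), sq_nonneg (w 1), sq_nonneg (w 2), sq_nonneg (w 3), sq_nonneg (w 4), sq_nonneg (w 5)]
    funext k
    fin_cases k <;> first | exact e0 | exact e1 | exact e2 | exact e3 | exact e4 | exact e5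

def uu (w : Fin 6 → ℝ) : ℝ := w 0 * w 5
def vv (w : Fin 6 → ℝ) : ℝ := -(w 1 * w 4 + w 2 * w 3)

/-- the quadric condition -/
def Quad (w : Fin 6 → ℝ) : Prop := w 0 * w 5 + w 2 * w 3 = w 1 * w 4

/-- the basic invariant map -/
def phi (w : Fin 6 → ℝ) : Fin 5 → ℝ :=
  ![r2 w * (w 0 ^ 2 - w 5 ^ 2), r2 w * (w 1 ^ 2 - w 4 ^ 2), r2 w * (w 2 ^ 2 - w 3 ^ 2),
    uu w ^ 2 - vv w ^ 2, 2 * (uu w * vv w)]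

lemma phi_apply0 (w : Fin 6 → ℝ) : phi w 0 = r2 w * (w 0 ^ 2 - w 5 ^ 2) := rfl
lemma phi_apply1 (w : Fin 6 → ℝ) : phi w 1 = r2 w * (w 1 ^ 2 - w 4 ^ 2) := rfl
lemma phi_apply2 (w : Fin 6 → ℝ) : phi w 2 = r2 w * (w 2 ^ 2 - w 3 ^ 2) := rfl
lemma phi_apply3 (w : Fin 6 → ℝ) : phi w 3 = uu w ^ 2 - vv w ^ 2 := rfl
lemma phi_apply4 (w : Fin 6 → ℝ) : phi w 4 = 2 * (uu w * vv w) := rfl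

lemma r2_smul (c : ℝ) (w : Fin 6 → ℝ) : r2 (fun k => c * w k) = c ^ 2 * r2 w := by
  unfold r2; ring

lemma phi_smul (c : ℝ) (w : Fin 6 → ℝ) (i : Fin 5) :
    phi (fun k => c * w k) i = c ^ 4 * phi w i := by
  fin_cases i
  · rw [show (⟨0, by norm_num⟩ : Fin 5) = 0 from rfl, phi_apply0, phi_apply0]
    simp only [r2]; ring
  · rw [show (⟨1, by norm_num⟩ : Fin 5) = 1 from rfl, phi_apply1, phi_apply1]
    simp only [r2]; ring
  · rw [show (⟨2, by norm_num⟩ : Fin 5) = 2 from rfl, phi_apply2, phi_apply2]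
    simp only [r2]; ring
  · rw [show (⟨3, by norm_num⟩ : Fin 5) = 3 from rfl, phi_apply3, phi_apply3]
    simp only [uu, vv]; ring
  · rw [show (⟨4, by norm_num⟩ : Fin 5) = 4 from rfl, phi_apply4, phi_apply4]
    simp only [uu, vv]; ring

lemma quad_smul {c : ℝ} {w : Fin 6 → ℝ} (hq : Quad w) : Quad (fun k => c * w k) := by
  unfold Quad at *
  linear_combination c ^ 2 * hq

/-- invariance of `phi` and `r2` under the sign action -/
lemma r2_sign (ε : Fin 4 → ℝ) (w : Fin 6 → ℝ) (hsq : ∀ i, ε i ^ 2 = 1) :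
    r2 (fun k => signCoef ε k * w k) = r2 w := by
  unfold r2
  simp only [signCoef_0, signCoef_1, signCoef_2, signCoef_3, signCoef_4, signCoef_5]
  linear_combination (w 0 ^ 2 * ε 1 ^ 2 + w 1 ^ 2 * ε 2 ^ 2 + w 2 ^ 2 * ε 3 ^ 2) * hsq 0 +
    (w 0 ^ 2 + w 3 ^ 2 * ε 2 ^ 2 + w 4 ^ 2 * ε 3 ^ 2) * hsq 1 +
    (w 1 ^ 2 + w 3 ^ 2 + w 5 ^ 2 * ε 3 ^ 2) * hsq 2 +
    (w 2 ^ 2 + w 4 ^ 2 + w 5 ^ 2) * hsq 3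

lemma phi_sign (ε : Fin 4 → ℝ) (w : Fin 6 → ℝ) (hε : ∀ i, ε i = 1 ∨ ε i = -1) (i : Fin 5) :
    phi (fun k => signCoef ε k * w k) i = phi w i := by
  have hsq : ∀ i, ε i ^ 2 = 1 := fun i => cases_sq (hε i)
  have hr2 := r2_sign ε w hsq
  have hτ : (ε 0 * ε 1 * ε 2 * ε 3) ^ 2 = 1 := by
    linear_combination (ε 1 ^ 2 * ε 2 ^ 2 * ε 3 ^ 2) * hsq 0 + (ε 2 ^ 2 * ε 3 ^ 2) * hsq 1 +
      (ε 3 ^ 2) * hsq 2 + hsq 3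
  have huu : uu (fun k => signCoef ε k * w k) = (ε 0 * ε 1 * ε 2 * ε 3) * uu w := by
    unfold uu
    simp only [signCoef_0, signCoef_5]
    ring
  have hvv : vv (fun k => signCoef ε k * w k) = (ε 0 * ε 1 * ε 2 * ε 3) * vv w := by
    unfold vv
    simp only [signCoef_1, signCoef_2, signCoef_3, signCoef_4]
    ring
  have hw2 : ∀ k : Fin 6, (signCoef ε k * w k) ^ 2 = w k ^ 2 := by
    intro k
    fin_cases k
    · show (signCoef ε 0 * w 0) ^ 2 = w 0 ^ 2
      rw [signCoef_0]
      linear_combination (w 0 ^ 2 * ε 1 ^ 2) * hsq 0 + w 0 ^ 2 * hsq 1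
    · show (signCoef ε 1 * w 1) ^ 2 = w 1 ^ 2
      rw [signCoef_1]
      linear_combination (w 1 ^ 2 * ε 2 ^ 2) * hsq 0 + w 1 ^ 2 * hsq 2
    · show (signCoef ε 2 * w 2) ^ 2 = w 2 ^ 2
      rw [signCoef_2]
      linear_combination (w 2 ^ 2 * ε 3 ^ 2) * hsq 0 + w 2 ^ 2 * hsq 3
    · show (signCoef ε 3 * w 3) ^ 2 = w 3 ^ 2
      rw [signCoef_3]
      linear_combination (w 3 ^ 2 * ε 2 ^ 2) * hsq 1 + w 3 ^ 2 * hsq 2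
    · show (signCoef ε 4 * w 4) ^ 2 = w 4 ^ 2
      rw [signCoef_4]
      linear_combination (w 4 ^ 2 * ε 3 ^ 2) * hsq 1 + w 4 ^ 2 * hsq 3
    · show (signCoef ε 5 * w 5) ^ 2 = w 5 ^ 2
      rw [signCoef_5]
      linear_combination (w 5 ^ 2 * ε 3 ^ 2) * hsq 2 + w 5 ^ 2 * hsq 3
  fin_cases i
  · rw [show (⟨0, by norm_num⟩ : Fin 5) = 0 from rfl, phi_apply0, phi_apply0, hr2,
      hw2 0, hw2 5]
  · rw [show (⟨1, by norm_num⟩ : Fin 5) = 1 from rfl, phi_apply1, phi_apply1, hr2,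
      hw2 1, hw2 4]
  · rw [show (⟨2, by norm_num⟩ : Fin 5) = 2 from rfl, phi_apply2, phi_apply2, hr2,
      hw2 2, hw2 3]
  · rw [show (⟨3, by norm_num⟩ : Fin 5) = 3 from rfl, phi_apply3, phi_apply3, huu, hvv]
    linear_combination (uu w ^ 2 - vv w ^ 2) * hτ
  · rw [show (⟨4, by norm_num⟩ : Fin 5) = 4 from rfl, phi_apply4, phi_apply4, huu, hvv]
    linear_combination (2 * (uu w * vv w)) * hτ

/-- `phi` does not vanish on the quadric -/
lemma phi_ne_zero {w : Fin 6 → ℝ} (hw : w ≠ 0) (hq : Quad w) : phi w ≠ 0 := by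
  intro h
  have h0 : r2 w * (w 0 ^ 2 - w 5 ^ 2) = 0 := by rw [← phi_apply0, h]; rfl
  have h1 : r2 w * (w 1 ^ 2 - w 4 ^ 2) = 0 := by rw [← phi_apply1, h]; rfl
  have h2 : r2 w * (w 2 ^ 2 - w 3 ^ 2) = 0 := by rw [← phi_apply2, h]; rfl
  have h3 : uu w ^ 2 - vv w ^ 2 = 0 := by rw [← phi_apply3, h]; rfl
  have h4 : 2 * (uu w * vv w) = 0 := by rw [← phi_apply4, h]; rfl
  have hrne : r2 w ≠ 0 := ne_of_gt (r2_pos w hw)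
  have ha0 : w 0 ^ 2 = w 5 ^ 2 := by
    rcases mul_eq_zero.mp h0 with h' | h'
    · exact absurd h' hrne
    · linarith
  have ha1 : w 1 ^ 2 = w 4 ^ 2 := by
    rcases mul_eq_zero.mp h1 with h' | h'
    · exact absurd h' hrne
    · linarith
  have ha2 : w 2 ^ 2 = w 3 ^ 2 := by
    rcases mul_eq_zero.mp h2 with h' | h'
    · exact absurd h' hrne
    · linarith
  have huv := pair_zero (by linarith : uu w ^ 2 = vv w ^ 2) (by linarith)
  have hu0 : w 0 * w 5 = 0 := huv.1
  have hq' : w 0 * w 5 + w 2 * w 3 = w 1 * w 4 := hq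
  have hv0 : w 1 * w 4 + w 2 * w 3 = 0 := by
    have := huv.2
    unfold vv at this
    linarith
  have h23 : w 2 * w 3 = 0 := by linarith
  have h14 : w 1 * w 4 = 0 := by linarith
  have p1 := pair_zero ha0 hu0
  have p2 := pair_zero ha1 h14
  have p3 := pair_zero ha2 h23
  apply hw
  funext k
  fin_cases k
  · exact p1.1
  · exact p2.1
  · exact p3.1
  · exact p3.2
  · exact p2.2
  · exact p1.2

/-- auxiliary: from `B² = κ²A + cκU`, `B'² = A + cU`, positivity, and `κ > 1`,
we get `B' ≤ B`. -/
lemma b_compare (A U B B' cc κ : ℝ) (hA : 0 ≤ A) (hU : 0 ≤ U) (hB : 0 ≤ B) (hB' : 0 ≤ B')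
    (hcc : 0 ≤ cc) (hκ : 1 < κ)
    (hBe : B ^ 2 = κ ^ 2 * A + cc * κ * U) (hBe' : B' ^ 2 = A + cc * U) : B' ≤ B := by
  have hk1 : (0 : ℝ) ≤ κ - 1 := by linarith
  have hsq : B' ^ 2 ≤ B ^ 2 := by
    nlinarith [mul_nonneg hk1 hA, mul_nonneg (mul_nonneg hk1 hk1) hA,
      mul_nonneg (mul_nonneg hcc hk1) hU]
  nlinarith [hsq, hB, hB']

/-- auxiliary: if moreover `B = B'` then `A = 0` and `U = 0`. -/
lemma b_rigid (A U B B' cc κ : ℝ) (hA : 0 ≤ A) (hU : 0 ≤ U)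
    (hcc : 0 < cc) (hκ : 1 < κ)
    (hBe : B ^ 2 = κ ^ 2 * A + cc * κ * U) (hBe' : B' ^ 2 = A + cc * U) (hE : B = B') :
    A = 0 ∧ U = 0 := by
  have hEq : κ ^ 2 * A + cc * κ * U = A + cc * U := by rw [← hBe, ← hBe', hE]
  have hfac : (κ - 1) * ((κ + 1) * A + cc * U) = 0 := by linear_combination hEq
  have hk1 : κ - 1 ≠ 0 := sub_ne_zero.mpr (ne_of_gt hκ)
  have hfac2 : (κ + 1) * A + cc * U = 0 := by
    rcases mul_eq_zero.mp hfac with h | h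
    · exact absurd h hk1
    · exact h
  have hU0 : U = 0 := by
    nlinarith [mul_nonneg (show (0 : ℝ) ≤ κ + 1 by linarith) hA, hfac2,
      mul_nonneg (le_of_lt hcc) hU]
  have hA0 : A = 0 := by
    nlinarith [hfac2, hU0, mul_nonneg (show (0 : ℝ) ≤ κ - 1 by linarith) hA]
  exact ⟨hA0, hU0⟩

set_option maxHeartbeats 2000000 in
/-- rigidity of the scale: if two normalized quadric points have proportional `phi`
with ratio `κ > 1`, contradiction. -/
lemma kappa_gt_one_absurd (w w' : Fin 6 → ℝ) (hq : Quad w) (hq' : Quad w')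
    (hr : r2 w = 1) (hr' : r2 w' = 1) (κ : ℝ) (hκ : 1 < κ)
    (hphi : ∀ i, phi w i = κ * phi w' i) : False := by
  have hκ0 : (0 : ℝ) < κ := by linarith
  -- the a-components
  have ha1 : w 0 ^ 2 - w 5 ^ 2 = κ * (w' 0 ^ 2 - w' 5 ^ 2) := by
    have h := hphi 0
    rw [phi_apply0, phi_apply0, hr, hr'] at h
    linarith [h]
  have ha2 : w 1 ^ 2 - w 4 ^ 2 = κ * (w' 1 ^ 2 - w' 4 ^ 2) := by
    have h := hphi 1
    rw [phi_apply1, phi_apply1, hr, hr'] at h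
    linarith [h]
  have ha3 : w 2 ^ 2 - w 3 ^ 2 = κ * (w' 2 ^ 2 - w' 3 ^ 2) := by
    have h := hphi 2
    rw [phi_apply2, phi_apply2, hr, hr'] at h
    linarith [h]
  have h3 : uu w ^ 2 - vv w ^ 2 = κ * (uu w' ^ 2 - vv w' ^ 2) := by
    have h := hphi 3
    rwa [phi_apply3, phi_apply3] at h
  have h4 : 2 * (uu w * vv w) = κ * (2 * (uu w' * vv w')) := by
    have h := hphi 4
    rwa [phi_apply4, phi_apply4] at h
  -- the norm of z
  have hPsq : (uu w ^ 2 + vv w ^ 2) ^ 2 = (κ * (uu w' ^ 2 + vv w' ^ 2)) ^ 2 := by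
    linear_combination ((uu w ^ 2 - vv w ^ 2) + κ * (uu w' ^ 2 - vv w' ^ 2)) * h3 +
      ((uu w * vv w) + κ * (uu w' * vv w')) * 2 * h4
  have hP : uu w ^ 2 + vv w ^ 2 = κ * (uu w' ^ 2 + vv w' ^ 2) := by
    rcases mul_self_eq_mul_self_iff.mp
        (by linear_combination hPsq :
          (uu w ^ 2 + vv w ^ 2) * (uu w ^ 2 + vv w ^ 2) =
            (κ * (uu w' ^ 2 + vv w' ^ 2)) * (κ * (uu w' ^ 2 + vv w' ^ 2))) with h | h
    · exact h
    · have h1 : (0:ℝ) ≤ uu w ^ 2 + vv w ^ 2 := by positivity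
      have h2 : (0:ℝ) ≤ κ * (uu w' ^ 2 + vv w' ^ 2) := by positivity
      linarith
  have hu2 : uu w ^ 2 = κ * uu w' ^ 2 := by linear_combination (hP + h3) / 2
  have hv2 : vv w ^ 2 = κ * vv w' ^ 2 := by linear_combination (hP - h3) / 2
  have huv : uu w * vv w = κ * (uu w' * vv w') := by linear_combination h4 / 2
  -- express the pair products by u, v using the quadric
  have h14w : w 1 * w 4 = (uu w - vv w) / 2 := by
    unfold Quad at hq
    unfold uu vv
    linarith
  have h23w : w 2 * w 3 = -(uu w + vv w) / 2 := by
    unfold Quad at hq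
    unfold uu vv
    linarith
  have h14w' : w' 1 * w' 4 = (uu w' - vv w') / 2 := by
    unfold Quad at hq'
    unfold uu vv
    linarith
  have h23w' : w' 2 * w' 3 = -(uu w' + vv w') / 2 := by
    unfold Quad at hq'
    unfold uu vv
    linarith
  -- the three "b" quantities
  have hb1' : (w' 0 ^ 2 + w' 5 ^ 2) ^ 2 = (w' 0 ^ 2 - w' 5 ^ 2) ^ 2 + 4 * uu w' ^ 2 := by
    unfold uu; ring
  have hb2' : (w' 1 ^ 2 + w' 4 ^ 2) ^ 2 = (w' 1 ^ 2 - w' 4 ^ 2) ^ 2 + (uu w' - vv w') ^ 2 := by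
    linear_combination (2 * (w' 1 * w' 4) + (uu w' - vv w')) * 2 * h14w'
  have hb3' : (w' 2 ^ 2 + w' 3 ^ 2) ^ 2 = (w' 2 ^ 2 - w' 3 ^ 2) ^ 2 + (uu w' + vv w') ^ 2 := by
    linear_combination (2 * (w' 2 * w' 3) - (uu w' + vv w')) * 2 * h23w'
  have hc1 : (w 0 ^ 2 + w 5 ^ 2) ^ 2 =
      κ ^ 2 * (w' 0 ^ 2 - w' 5 ^ 2) ^ 2 + 4 * κ * uu w' ^ 2 := by
    have hb1 : (w 0 ^ 2 + w 5 ^ 2) ^ 2 = (w 0 ^ 2 - w 5 ^ 2) ^ 2 + 4 * uu w ^ 2 := by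
      unfold uu; ring
    linear_combination hb1 + ((w 0 ^ 2 - w 5 ^ 2) + κ * (w' 0 ^ 2 - w' 5 ^ 2)) * ha1 + 4 * hu2
  have hc2 : (w 1 ^ 2 + w 4 ^ 2) ^ 2 =
      κ ^ 2 * (w' 1 ^ 2 - w' 4 ^ 2) ^ 2 + κ * (uu w' - vv w') ^ 2 := by
    have hb2 : (w 1 ^ 2 + w 4 ^ 2) ^ 2 = (w 1 ^ 2 - w 4 ^ 2) ^ 2 + (uu w - vv w) ^ 2 := by
      linear_combination (2 * (w 1 * w 4) + (uu w - vv w)) * 2 * h14w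
    have hUV2 : (uu w - vv w) ^ 2 = κ * (uu w' - vv w') ^ 2 := by
      linear_combination hu2 + hv2 - 2 * huv
    linear_combination hb2 + ((w 1 ^ 2 - w 4 ^ 2) + κ * (w' 1 ^ 2 - w' 4 ^ 2)) * ha2 + hUV2
  have hc3 : (w 2 ^ 2 + w 3 ^ 2) ^ 2 =
      κ ^ 2 * (w' 2 ^ 2 - w' 3 ^ 2) ^ 2 + κ * (uu w' + vv w') ^ 2 := by
    have hb3 : (w 2 ^ 2 + w 3 ^ 2) ^ 2 = (w 2 ^ 2 - w 3 ^ 2) ^ 2 + (uu w + vv w) ^ 2 := by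
      linear_combination (2 * (w 2 * w 3) - (uu w + vv w)) * 2 * h23w
    have hUV3 : (uu w + vv w) ^ 2 = κ * (uu w' + vv w') ^ 2 := by
      linear_combination hu2 + hv2 + 2 * huv
    linear_combination hb3 + ((w 2 ^ 2 - w 3 ^ 2) + κ * (w' 2 ^ 2 - w' 3 ^ 2)) * ha3 + hUV3
  -- rewrite the mixed κ-coefficients to the `b_compare` format
  have hc2' : (w 1 ^ 2 + w 4 ^ 2) ^ 2 =
      κ ^ 2 * (w' 1 ^ 2 - w' 4 ^ 2) ^ 2 + 1 * κ * (uu w' - vv w') ^ 2 := by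
    linear_combination hc2
  have hc3' : (w 2 ^ 2 + w 3 ^ 2) ^ 2 =
      κ ^ 2 * (w' 2 ^ 2 - w' 3 ^ 2) ^ 2 + 1 * κ * (uu w' + vv w') ^ 2 := by
    linear_combination hc3
  have hc1' : (w 0 ^ 2 + w 5 ^ 2) ^ 2 =
      κ ^ 2 * (w' 0 ^ 2 - w' 5 ^ 2) ^ 2 + 4 * κ * uu w' ^ 2 := hc1
  have hd1' : (w' 0 ^ 2 + w' 5 ^ 2) ^ 2 = (w' 0 ^ 2 - w' 5 ^ 2) ^ 2 + 4 * uu w' ^ 2 := hb1'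
  have hd2' : (w' 1 ^ 2 + w' 4 ^ 2) ^ 2 = (w' 1 ^ 2 - w' 4 ^ 2) ^ 2 + 1 * (uu w' - vv w') ^ 2 := by
    linear_combination hb2'
  have hd3' : (w' 2 ^ 2 + w' 3 ^ 2) ^ 2 = (w' 2 ^ 2 - w' 3 ^ 2) ^ 2 + 1 * (uu w' + vv w') ^ 2 := by
    linear_combination hb3'
  have hge1 : w' 0 ^ 2 + w' 5 ^ 2 ≤ w 0 ^ 2 + w 5 ^ 2 :=
    b_compare ((w' 0 ^ 2 - w' 5 ^ 2) ^ 2) (uu w' ^ 2) (w 0 ^ 2 + w 5 ^ 2)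
      (w' 0 ^ 2 + w' 5 ^ 2) 4 κ (sq_nonneg _) (sq_nonneg _)
      (by positivity) (by positivity) (by norm_num) hκ hc1' hd1'
  have hge2 : w' 1 ^ 2 + w' 4 ^ 2 ≤ w 1 ^ 2 + w 4 ^ 2 :=
    b_compare ((w' 1 ^ 2 - w' 4 ^ 2) ^ 2) ((uu w' - vv w') ^ 2) (w 1 ^ 2 + w 4 ^ 2)
      (w' 1 ^ 2 + w' 4 ^ 2) 1 κ (sq_nonneg _) (sq_nonneg _)
      (by positivity) (by positivity) (by norm_num) hκ hc2' hd2'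
  have hge3 : w' 2 ^ 2 + w' 3 ^ 2 ≤ w 2 ^ 2 + w 3 ^ 2 :=
    b_compare ((w' 2 ^ 2 - w' 3 ^ 2) ^ 2) ((uu w' + vv w') ^ 2) (w 2 ^ 2 + w 3 ^ 2)
      (w' 2 ^ 2 + w' 3 ^ 2) 1 κ (sq_nonneg _) (sq_nonneg _)
      (by positivity) (by positivity) (by norm_num) hκ hc3' hd3'
  have hsw : w 0 ^ 2 + w 5 ^ 2 + (w 1 ^ 2 + w 4 ^ 2) + (w 2 ^ 2 + w 3 ^ 2) = 1 := by
    unfold r2 at hr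
    linarith
  have hsw' : w' 0 ^ 2 + w' 5 ^ 2 + (w' 1 ^ 2 + w' 4 ^ 2) + (w' 2 ^ 2 + w' 3 ^ 2) = 1 := by
    unfold r2 at hr'
    linarith
  have he1 : w 0 ^ 2 + w 5 ^ 2 = w' 0 ^ 2 + w' 5 ^ 2 := by
    linarith only [hsw, hsw', hge1, hge2, hge3]
  have he2 : w 1 ^ 2 + w 4 ^ 2 = w' 1 ^ 2 + w' 4 ^ 2 := by
    linarith only [hsw, hsw', hge1, hge2, hge3]
  have he3 : w 2 ^ 2 + w 3 ^ 2 = w' 2 ^ 2 + w' 3 ^ 2 := by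
    linarith only [hsw, hsw', hge1, hge2, hge3]
  have hz1 : (w' 0 ^ 2 - w' 5 ^ 2) ^ 2 = 0 ∧ uu w' ^ 2 = 0 :=
    b_rigid ((w' 0 ^ 2 - w' 5 ^ 2) ^ 2) (uu w' ^ 2) (w 0 ^ 2 + w 5 ^ 2)
      (w' 0 ^ 2 + w' 5 ^ 2) 4 κ (sq_nonneg _) (sq_nonneg _) (by norm_num) hκ hc1' hd1' he1
  have hz2 : (w' 1 ^ 2 - w' 4 ^ 2) ^ 2 = 0 ∧ (uu w' - vv w') ^ 2 = 0 :=
    b_rigid ((w' 1 ^ 2 - w' 4 ^ 2) ^ 2) ((uu w' - vv w') ^ 2) (w 1 ^ 2 + w 4 ^ 2)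
      (w' 1 ^ 2 + w' 4 ^ 2) 1 κ (sq_nonneg _) (sq_nonneg _) (by norm_num) hκ hc2' hd2' he2
  have hz3 : (w' 2 ^ 2 - w' 3 ^ 2) ^ 2 = 0 ∧ (uu w' + vv w') ^ 2 = 0 :=
    b_rigid ((w' 2 ^ 2 - w' 3 ^ 2) ^ 2) ((uu w' + vv w') ^ 2) (w 2 ^ 2 + w 3 ^ 2)
      (w' 2 ^ 2 + w' 3 ^ 2) 1 κ (sq_nonneg _) (sq_nonneg _) (by norm_num) hκ hc3' hd3' he3
  have q1 : (w' 0 ^ 2 + w' 5 ^ 2) ^ 2 = 0 := by rw [hd1', hz1.1, hz1.2]; ring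
  have q2 : (w' 1 ^ 2 + w' 4 ^ 2) ^ 2 = 0 := by rw [hd2', hz2.1, hz2.2]; ring
  have q3 : (w' 2 ^ 2 + w' 3 ^ 2) ^ 2 = 0 := by rw [hd3', hz3.1, hz3.2]; ring
  have q1' : w' 0 ^ 2 + w' 5 ^ 2 = 0 := pow_eq_zero_iff (n := 2) (by norm_num) |>.mp q1
  have q2' : w' 1 ^ 2 + w' 4 ^ 2 = 0 := pow_eq_zero_iff (n := 2) (by norm_num) |>.mp q2
  have q3' : w' 2 ^ 2 + w' 3 ^ 2 = 0 := pow_eq_zero_iff (n := 2) (by norm_num) |>.mp q3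
  linarith only [q1', q2', q3', hsw']

set_option maxHeartbeats 2000000 in
/-- main injectivity step: proportional `phi` on normalized quadric points implies the points
differ by the sign action and a scalar. -/
lemma orbit_exists (w w' : Fin 6 → ℝ) (hq : Quad w) (hq' : Quad w')
    (hr : r2 w = 1) (hr' : r2 w' = 1) (κ : ℝ) (hκ : 0 < κ)
    (hphi : ∀ i, phi w i = κ * phi w' i) :
    ∃ ε : Fin 4 → ℝ, (∀ i, ε i = 1 ∨ ε i = -1) ∧
      ∃ c : ℝ, c ≠ 0 ∧ ∀ k, w' k = c * (signCoef ε k * w k) := by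
  have hκ1 : κ = 1 := by
    rcases lt_trichotomy κ 1 with h | h | h
    · exfalso
      refine kappa_gt_one_absurd w' w hq' hq hr' hr κ⁻¹ ((one_lt_inv₀ hκ).mpr h) ?_
      intro i
      have := hphi i
      field_simp
      linarith [hphi i]
    · exact h
    · exact absurd hphi (fun hp => kappa_gt_one_absurd w w' hq hq' hr hr' κ h hp)
  subst hκ1
  replace hphi : ∀ i, phi w i = phi w' i := by
    intro i
    rw [hphi i, one_mul]
  have ha1 : w 0 ^ 2 - w 5 ^ 2 = w' 0 ^ 2 - w' 5 ^ 2 := by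
    have h := hphi 0
    rw [phi_apply0, phi_apply0, hr, hr'] at h
    linarith [h]
  have ha2 : w 1 ^ 2 - w 4 ^ 2 = w' 1 ^ 2 - w' 4 ^ 2 := by
    have h := hphi 1
    rw [phi_apply1, phi_apply1, hr, hr'] at h
    linarith [h]
  have ha3 : w 2 ^ 2 - w 3 ^ 2 = w' 2 ^ 2 - w' 3 ^ 2 := by
    have h := hphi 2
    rw [phi_apply2, phi_apply2, hr, hr'] at h
    linarith [h]
  have h3 : (w 0 * w 5) ^ 2 - (-(w 1 * w 4 + w 2 * w 3)) ^ 2 =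
      (w' 0 * w' 5) ^ 2 - (-(w' 1 * w' 4 + w' 2 * w' 3)) ^ 2 := by
    have h := hphi 3
    rw [phi_apply3, phi_apply3] at h
    unfold uu vv at h
    exact h
  have h4 : (w 0 * w 5) * (-(w 1 * w 4 + w 2 * w 3)) =
      (w' 0 * w' 5) * (-(w' 1 * w' 4 + w' 2 * w' 3)) := by
    have h := hphi 4
    rw [phi_apply4, phi_apply4] at h
    unfold uu vv at h
    linarith [h]
  have hPsq : ((w 0 * w 5) ^ 2 + (-(w 1 * w 4 + w 2 * w 3)) ^ 2) ^ 2 =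
      ((w' 0 * w' 5) ^ 2 + (-(w' 1 * w' 4 + w' 2 * w' 3)) ^ 2) ^ 2 := by
    linear_combination
      (((w 0 * w 5) ^ 2 - (-(w 1 * w 4 + w 2 * w 3)) ^ 2) +
        ((w' 0 * w' 5) ^ 2 - (-(w' 1 * w' 4 + w' 2 * w' 3)) ^ 2)) * h3 +
      ((w 0 * w 5) * (-(w 1 * w 4 + w 2 * w 3)) +
        (w' 0 * w' 5) * (-(w' 1 * w' 4 + w' 2 * w' 3))) * 4 * h4
  have hP : (w 0 * w 5) ^ 2 + (-(w 1 * w 4 + w 2 * w 3)) ^ 2 =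
      (w' 0 * w' 5) ^ 2 + (-(w' 1 * w' 4 + w' 2 * w' 3)) ^ 2 := by
    rcases mul_self_eq_mul_self_iff.mp
        (by linear_combination hPsq :
          ((w 0 * w 5) ^ 2 + (-(w 1 * w 4 + w 2 * w 3)) ^ 2) *
              ((w 0 * w 5) ^ 2 + (-(w 1 * w 4 + w 2 * w 3)) ^ 2) =
            ((w' 0 * w' 5) ^ 2 + (-(w' 1 * w' 4 + w' 2 * w' 3)) ^ 2) *
              ((w' 0 * w' 5) ^ 2 + (-(w' 1 * w' 4 + w' 2 * w' 3)) ^ 2)) with h | h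
    · exact h
    · exact eq_of_eq_neg_nonneg (by positivity) (by positivity) h
  have hu2 : (w 0 * w 5) ^ 2 = (w' 0 * w' 5) ^ 2 := by linear_combination (hP + h3) / 2
  have hv2 : (-(w 1 * w 4 + w 2 * w 3)) ^ 2 = (-(w' 1 * w' 4 + w' 2 * w' 3)) ^ 2 := by
    linear_combination (hP - h3) / 2
  -- extract the common sign η on (u, v)
  obtain ⟨η, hηpm, hu, hv⟩ : ∃ η : ℝ, (η = 1 ∨ η = -1) ∧
      w 0 * w 5 = η * (w' 0 * w' 5) ∧
      -(w 1 * w 4 + w 2 * w 3) = η * (-(w' 1 * w' 4 + w' 2 * w' 3)) := by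
    by_cases h0 : w' 0 * w' 5 = 0
    · have h0' : w 0 * w 5 = 0 := by
        have h' : (w 0 * w 5) ^ 2 = 0 := by rw [hu2, h0]; ring
        exact pow_eq_zero_iff (n := 2) (by norm_num) |>.mp h'
      rcases mul_self_eq_mul_self_iff.mp (by linear_combination hv2 :
          (-(w 1 * w 4 + w 2 * w 3)) * (-(w 1 * w 4 + w 2 * w 3)) =
            (-(w' 1 * w' 4 + w' 2 * w' 3)) * (-(w' 1 * w' 4 + w' 2 * w' 3))) with h | h
      · exact ⟨1, Or.inl rfl, by rw [h0', h0]; ring, by rw [h]; ring⟩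
      · exact ⟨-1, Or.inr rfl, by rw [h0', h0]; ring, by rw [h]; ring⟩
    · rcases mul_self_eq_mul_self_iff.mp (by linear_combination hu2 :
          (w 0 * w 5) * (w 0 * w 5) = (w' 0 * w' 5) * (w' 0 * w' 5)) with h | h
      · refine ⟨1, Or.inl rfl, by rw [h]; ring, ?_⟩
        have h' : (w' 0 * w' 5) * (-(w 1 * w 4 + w 2 * w 3)) =
            (w' 0 * w' 5) * (-(w' 1 * w' 4 + w' 2 * w' 3)) := by
          linear_combination h4 - (-(w 1 * w 4 + w 2 * w 3)) * h
        have := mul_left_cancel₀ h0 h'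
        rw [this]; ring
      · refine ⟨-1, Or.inr rfl, by rw [h]; ring, ?_⟩
        have h' : (w' 0 * w' 5) * (-(w 1 * w 4 + w 2 * w 3)) =
            (w' 0 * w' 5) * (-(-(w' 1 * w' 4 + w' 2 * w' 3))) := by
          linear_combination -h4 + (-(w 1 * w 4 + w 2 * w 3)) * h
        have := mul_left_cancel₀ h0 h'
        rw [this]; ring
  have hη2 : η ^ 2 = 1 := cases_sq hηpm
  -- the pair products
  have hp1 : w 0 * w 5 = η * (w' 0 * w' 5) := hu
  have hp2 : w 1 * w 4 = η * (w' 1 * w' 4) := by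
    unfold Quad at hq hq'
    linear_combination (η * hq' - hq - hv + hu) / 2
  have hp3 : w 2 * w 3 = η * (w' 2 * w' 3) := by
    unfold Quad at hq hq'
    linear_combination (hq - hv - hu - η * hq') / 2
  -- squares of pairs are equal
  have hq1 : (w 0 * w 5) ^ 2 = (w' 0 * w' 5) ^ 2 := hu2
  have hq2 : (w 1 * w 4) ^ 2 = (w' 1 * w' 4) ^ 2 := by
    linear_combination (w 1 * w 4 + η * (w' 1 * w' 4)) * hp2 + (w' 1 * w' 4) ^ 2 * hη2
  have hq3 : (w 2 * w 3) ^ 2 = (w' 2 * w' 3) ^ 2 := by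
    linear_combination (w 2 * w 3 + η * (w' 2 * w' 3)) * hp3 + (w' 2 * w' 3) ^ 2 * hη2
  have hs1 : (w 0 ^ 2 + w 5 ^ 2) ^ 2 = (w' 0 ^ 2 + w' 5 ^ 2) ^ 2 := by
    linear_combination ((w 0 ^ 2 - w 5 ^ 2) + (w' 0 ^ 2 - w' 5 ^ 2)) * ha1 + 4 * hq1
  have hs2 : (w 1 ^ 2 + w 4 ^ 2) ^ 2 = (w' 1 ^ 2 + w' 4 ^ 2) ^ 2 := by
    linear_combination ((w 1 ^ 2 - w 4 ^ 2) + (w' 1 ^ 2 - w' 4 ^ 2)) * ha2 + 4 * hq2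
  have hs3 : (w 2 ^ 2 + w 3 ^ 2) ^ 2 = (w' 2 ^ 2 + w' 3 ^ 2) ^ 2 := by
    linear_combination ((w 2 ^ 2 - w 3 ^ 2) + (w' 2 ^ 2 - w' 3 ^ 2)) * ha3 + 4 * hq3
  have hbe1 : w 0 ^ 2 + w 5 ^ 2 = w' 0 ^ 2 + w' 5 ^ 2 := by
    rcases mul_self_eq_mul_self_iff.mp (by linear_combination hs1 :
        (w 0 ^ 2 + w 5 ^ 2) * (w 0 ^ 2 + w 5 ^ 2) =
          (w' 0 ^ 2 + w' 5 ^ 2) * (w' 0 ^ 2 + w' 5 ^ 2)) with h | h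
    · exact h
    · exact eq_of_eq_neg_nonneg (by positivity) (by positivity) h
  have hbe2 : w 1 ^ 2 + w 4 ^ 2 = w' 1 ^ 2 + w' 4 ^ 2 := by
    rcases mul_self_eq_mul_self_iff.mp (by linear_combination hs2 :
        (w 1 ^ 2 + w 4 ^ 2) * (w 1 ^ 2 + w 4 ^ 2) =
          (w' 1 ^ 2 + w' 4 ^ 2) * (w' 1 ^ 2 + w' 4 ^ 2)) with h | h
    · exact h
    · exact eq_of_eq_neg_nonneg (by positivity) (by positivity) h
  have hbe3 : w 2 ^ 2 + w 3 ^ 2 = w' 2 ^ 2 + w' 3 ^ 2 := by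
    rcases mul_self_eq_mul_self_iff.mp (by linear_combination hs3 :
        (w 2 ^ 2 + w 3 ^ 2) * (w 2 ^ 2 + w 3 ^ 2) =
          (w' 2 ^ 2 + w' 3 ^ 2) * (w' 2 ^ 2 + w' 3 ^ 2)) with h | h
    · exact h
    · exact eq_of_eq_neg_nonneg (by positivity) (by positivity) h
  have hw0sq : w 0 ^ 2 = w' 0 ^ 2 := by linarith only [ha1, hbe1]
  have hw5sq : w 5 ^ 2 = w' 5 ^ 2 := by linarith only [ha1, hbe1]
  have hw1sq : w 1 ^ 2 = w' 1 ^ 2 := by linarith only [ha2, hbe2]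
  have hw4sq : w 4 ^ 2 = w' 4 ^ 2 := by linarith only [ha2, hbe2]
  have hw2sq : w 2 ^ 2 = w' 2 ^ 2 := by linarith only [ha3, hbe3]
  have hw3sq : w 3 ^ 2 = w' 3 ^ 2 := by linarith only [ha3, hbe3]
  obtain ⟨d0, d5, hd0, hd5, hpr1, he0, he5⟩ := pair_signs hηpm hw0sq hw5sq hp1
  obtain ⟨d1, d4, hd1, hd4, hpr2, he1, he4⟩ := pair_signs hηpm hw1sq hw4sq hp2
  obtain ⟨d2, d3, hd2, hd3, hpr3, he2, he3⟩ := pair_signs hηpm hw2sq hw3sq hp3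
  have hdall : ∀ k : Fin 6, (![d0, d1, d2, d3, d4, d5]) k = 1 ∨ (![d0, d1, d2, d3, d4, d5]) k = -1 := by
    intro k
    fin_cases k
    · exact hd0
    · exact hd1
    · exact hd2
    · exact hd3
    · exact hd4
    · exact hd5
  have h14δ : (![d0, d1, d2, d3, d4, d5]) 0 * (![d0, d1, d2, d3, d4, d5]) 5 =
      (![d0, d1, d2, d3, d4, d5]) 1 * (![d0, d1, d2, d3, d4, d5]) 4 := by
    show d0 * d5 = d1 * d4
    rw [hpr1, hpr2]
  have h23δ : (![d0, d1, d2, d3, d4, d5]) 0 * (![d0, d1, d2, d3, d4, d5]) 5 =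
      (![d0, d1, d2, d3, d4, d5]) 2 * (![d0, d1, d2, d3, d4, d5]) 3 := by
    show d0 * d5 = d2 * d3
    rw [hpr1, hpr3]
  obtain ⟨ε, hε, hcase⟩ := sigma_realize (![d0, d1, d2, d3, d4, d5]) hdall h14δ h23δ
  refine ⟨ε, hε, ?_⟩
  rcases hcase with hcase | hcase
  · refine ⟨1, one_ne_zero, ?_⟩
    have g0 : d0 = signCoef ε 0 := hcase 0
    have g1 : d1 = signCoef ε 1 := hcase 1
    have g2 : d2 = signCoef ε 2 := hcase 2
    have g3 : d3 = signCoef ε 3 := hcase 3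
    have g4 : d4 = signCoef ε 4 := hcase 4
    have g5 : d5 = signCoef ε 5 := hcase 5
    intro k
    fin_cases k
    · show w' 0 = 1 * (signCoef ε 0 * w 0); rw [← g0, he0]; ring
    · show w' 1 = 1 * (signCoef ε 1 * w 1); rw [← g1, he1]; ring
    · show w' 2 = 1 * (signCoef ε 2 * w 2); rw [← g2, he2]; ring
    · show w' 3 = 1 * (signCoef ε 3 * w 3); rw [← g3, he3]; ring
    · show w' 4 = 1 * (signCoef ε 4 * w 4); rw [← g4, he4]; ring
    · show w' 5 = 1 * (signCoef ε 5 * w 5); rw [← g5, he5]; ring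
  · refine ⟨-1, by norm_num, ?_⟩
    have g0 : d0 = -signCoef ε 0 := hcase 0
    have g1 : d1 = -signCoef ε 1 := hcase 1
    have g2 : d2 = -signCoef ε 2 := hcase 2
    have g3 : d3 = -signCoef ε 3 := hcase 3
    have g4 : d4 = -signCoef ε 4 := hcase 4
    have g5 : d5 = -signCoef ε 5 := hcase 5
    intro k
    fin_cases k
    · show w' 0 = -1 * (signCoef ε 0 * w 0); rw [he0, g0]; ring
    · show w' 1 = -1 * (signCoef ε 1 * w 1); rw [he1, g1]; ring
    · show w' 2 = -1 * (signCoef ε 2 * w 2); rw [he2, g2]; ring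
    · show w' 3 = -1 * (signCoef ε 3 * w 3); rw [he3, g3]; ring
    · show w' 4 = -1 * (signCoef ε 4 * w 4); rw [he4, g4]; ring
    · show w' 5 = -1 * (signCoef ε 5 * w 5); rw [he5, g5]; ring

set_option maxHeartbeats 4000000 in
/-- surjectivity: every point of the unit sphere of `ℝ⁵` is `phi w` (up to positive scale)
for a normalized quadric point `w`. -/
lemma surj_construct (α : Fin 5 → ℝ)
    (hα : α 0 ^ 2 + α 1 ^ 2 + α 2 ^ 2 + α 3 ^ 2 + α 4 ^ 2 = 1) :
    ∃ (w : Fin 6 → ℝ) (κ : ℝ), 0 < κ ∧ Quad w ∧ r2 w = 1 ∧ ∀ i, phi w i = κ * α i := by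
  set N := Real.sqrt (α 3 ^ 2 + α 4 ^ 2) with hNdef
  have hN0 : 0 ≤ N := Real.sqrt_nonneg _
  have hN2 : N ^ 2 = α 3 ^ 2 + α 4 ^ 2 := Real.sq_sqrt (by positivity)
  have habs3 : |α 3| ≤ N := by
    rw [← Real.sqrt_sq_eq_abs, hNdef]
    exact Real.sqrt_le_sqrt (by nlinarith [sq_nonneg (α 4)])
  have habs4 : |α 4| ≤ N := by
    rw [← Real.sqrt_sq_eq_abs, hNdef]
    exact Real.sqrt_le_sqrt (by nlinarith [sq_nonneg (α 3)])
  have h3le := abs_le.mp habs3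
  have h4le := abs_le.mp habs4
  -- the normalizing function
  have hfc : Continuous (fun t : ℝ => Real.sqrt ((t * α 0) ^ 2 + 2 * (t * N + t * α 3)) +
      Real.sqrt ((t * α 1) ^ 2 + (t * N - t * α 4)) +
      Real.sqrt ((t * α 2) ^ 2 + (t * N + t * α 4))) := by
    apply Continuous.add
    apply Continuous.add
    · exact Continuous.sqrt (by fun_prop)
    · exact Continuous.sqrt (by fun_prop)
    · exact Continuous.sqrt (by fun_prop)
  have hf0 : (fun t : ℝ => Real.sqrt ((t * α 0) ^ 2 + 2 * (t * N + t * α 3)) +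
      Real.sqrt ((t * α 1) ^ 2 + (t * N - t * α 4)) +
      Real.sqrt ((t * α 2) ^ 2 + (t * N + t * α 4))) 0 = 0 := by
    norm_num
  have hf3 : 1 ≤ (fun t : ℝ => Real.sqrt ((t * α 0) ^ 2 + 2 * (t * N + t * α 3)) +
      Real.sqrt ((t * α 1) ^ 2 + (t * N - t * α 4)) +
      Real.sqrt ((t * α 2) ^ 2 + (t * N + t * α 4))) 3 := by
    show 1 ≤ Real.sqrt ((3 * α 0) ^ 2 + 2 * (3 * N + 3 * α 3)) +
      Real.sqrt ((3 * α 1) ^ 2 + (3 * N - 3 * α 4)) +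
      Real.sqrt ((3 * α 2) ^ 2 + (3 * N + 3 * α 4))
    rcases le_or_gt (1 / 2) (α 0 ^ 2 + α 1 ^ 2 + α 2 ^ 2) with hc | hc
    · -- the a-part is large
      have k0 : Real.sqrt ((3 * α 0) ^ 2) ≤ Real.sqrt ((3 * α 0) ^ 2 + 2 * (3 * N + 3 * α 3)) :=
        Real.sqrt_le_sqrt (by nlinarith [h3le.1])
      have k1 : Real.sqrt ((3 * α 1) ^ 2) ≤ Real.sqrt ((3 * α 1) ^ 2 + (3 * N - 3 * α 4)) :=
        Real.sqrt_le_sqrt (by nlinarith [h4le.2])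
      have k2 : Real.sqrt ((3 * α 2) ^ 2) ≤ Real.sqrt ((3 * α 2) ^ 2 + (3 * N + 3 * α 4)) :=
        Real.sqrt_le_sqrt (by nlinarith [h4le.1])
      have e0 : Real.sqrt ((3 * α 0) ^ 2) = 3 * |α 0| := by
        rw [Real.sqrt_sq_eq_abs, abs_mul]
        norm_num
      have e1 : Real.sqrt ((3 * α 1) ^ 2) = 3 * |α 1| := by
        rw [Real.sqrt_sq_eq_abs, abs_mul]
        norm_num
      have e2 : Real.sqrt ((3 * α 2) ^ 2) = 3 * |α 2| := by
        rw [Real.sqrt_sq_eq_abs, abs_mul]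
        norm_num
      have hS : 1 ≤ 3 * (|α 0| + |α 1| + |α 2|) := by
        have h1 : α 0 ^ 2 + α 1 ^ 2 + α 2 ^ 2 ≤ (|α 0| + |α 1| + |α 2|) ^ 2 := by
          nlinarith [abs_nonneg (α 0), abs_nonneg (α 1), abs_nonneg (α 2),
            sq_abs (α 0), sq_abs (α 1), sq_abs (α 2),
            mul_nonneg (abs_nonneg (α 0)) (abs_nonneg (α 1)),
            mul_nonneg (abs_nonneg (α 0)) (abs_nonneg (α 2)),
            mul_nonneg (abs_nonneg (α 1)) (abs_nonneg (α 2))]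
        have h2 : 0 ≤ |α 0| + |α 1| + |α 2| := by positivity
        nlinarith [h1, h2, hc]
      rw [e0] at k0
      rw [e1] at k1
      rw [e2] at k2
      linarith
    · -- the z-part is large
      have hcN : 1 / 2 ≤ N ^ 2 := by rw [hN2]; linarith
      have hNge : 7 / 10 ≤ N := by nlinarith
      have k1 : Real.sqrt (3 * N - 3 * α 4) ≤ Real.sqrt ((3 * α 1) ^ 2 + (3 * N - 3 * α 4)) :=
        Real.sqrt_le_sqrt (by nlinarith [sq_nonneg (3 * α 1)])
      have k2 : Real.sqrt (3 * N + 3 * α 4) ≤ Real.sqrt ((3 * α 2) ^ 2 + (3 * N + 3 * α 4)) :=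
        Real.sqrt_le_sqrt (by nlinarith [sq_nonneg (3 * α 2)])
      have s1 : Real.sqrt (3 * N - 3 * α 4) ^ 2 = 3 * N - 3 * α 4 :=
        Real.sq_sqrt (by nlinarith [h4le.2])
      have s2 : Real.sqrt (3 * N + 3 * α 4) ^ 2 = 3 * N + 3 * α 4 :=
        Real.sq_sqrt (by nlinarith [h4le.1])
      have s1n : 0 ≤ Real.sqrt (3 * N - 3 * α 4) := Real.sqrt_nonneg _
      have s2n : 0 ≤ Real.sqrt (3 * N + 3 * α 4) := Real.sqrt_nonneg _
      have hsum : 1 ≤ Real.sqrt (3 * N - 3 * α 4) + Real.sqrt (3 * N + 3 * α 4) := by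
        nlinarith [s1, s2, s1n, s2n, hNge, mul_nonneg s1n s2n]
      have k0 : (0 : ℝ) ≤ Real.sqrt ((3 * α 0) ^ 2 + 2 * (3 * N + 3 * α 3)) :=
        Real.sqrt_nonneg _
      linarith
  -- find the normalizing constant by the intermediate value theorem
  obtain ⟨κ, hκmem, hκeq⟩ := intermediate_value_Icc (by norm_num : (0 : ℝ) ≤ 3)
    hfc.continuousOn (by rw [hf0]; exact ⟨by norm_num, hf3⟩ : (1 : ℝ) ∈
      Set.Icc ((fun t : ℝ => Real.sqrt ((t * α 0) ^ 2 + 2 * (t * N + t * α 3)) +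
        Real.sqrt ((t * α 1) ^ 2 + (t * N - t * α 4)) +
        Real.sqrt ((t * α 2) ^ 2 + (t * N + t * α 4))) 0)
      ((fun t : ℝ => Real.sqrt ((t * α 0) ^ 2 + 2 * (t * N + t * α 3)) +
        Real.sqrt ((t * α 1) ^ 2 + (t * N - t * α 4)) +
        Real.sqrt ((t * α 2) ^ 2 + (t * N + t * α 4))) 3))
  replace hκeq : Real.sqrt ((κ * α 0) ^ 2 + 2 * (κ * N + κ * α 3)) +
      Real.sqrt ((κ * α 1) ^ 2 + (κ * N - κ * α 4)) +
      Real.sqrt ((κ * α 2) ^ 2 + (κ * N + κ * α 4)) = 1 := hκeq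
  have hκ0 : 0 ≤ κ := hκmem.1
  have hκpos : 0 < κ := by
    rcases hκ0.lt_or_eq with h | h
    · exact h
    · exfalso
      rw [← h] at hκeq
      norm_num at hκeq
  clear hfc hf0 hf3 hκmem habs3 habs4
  -- names
  set a1 := κ * α 0 with ha1def
  set a2 := κ * α 1 with ha2def
  set a3 := κ * α 2 with ha3def
  set z1 := κ * α 3 with hz1def
  set z2 := κ * α 4 with hz2def
  set Z := κ * N with hZdef
  have hZ0 : 0 ≤ Z := by positivity
  have hz1le : -Z ≤ z1 ∧ z1 ≤ Z := by
    constructor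
    · rw [hz1def, hZdef]
      linarith only [mul_le_mul_of_nonneg_left h3le.1 hκ0]
    · rw [hz1def, hZdef]
      linarith only [mul_le_mul_of_nonneg_left h3le.2 hκ0]
  have hz2le : -Z ≤ z2 ∧ z2 ≤ Z := by
    constructor
    · rw [hz2def, hZdef]
      linarith only [mul_le_mul_of_nonneg_left h4le.1 hκ0]
    · rw [hz2def, hZdef]
      linarith only [mul_le_mul_of_nonneg_left h4le.2 hκ0]
  have hZsq : Z ^ 2 = z1 ^ 2 + z2 ^ 2 := by
    rw [hZdef, hz1def, hz2def]
    linear_combination κ ^ 2 * hN2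
  -- the square root of z
  set u := Real.sqrt ((Z + z1) / 2) with hudef
  set vA := Real.sqrt ((Z - z1) / 2) with hvAdef
  set v : ℝ := if 0 ≤ z2 then vA else -vA with hvdef
  have hu0 : 0 ≤ u := Real.sqrt_nonneg _
  have hvA0 : 0 ≤ vA := Real.sqrt_nonneg _
  have hu2 : u ^ 2 = (Z + z1) / 2 := Real.sq_sqrt (by linarith only [hz1le.1])
  have hv2 : v ^ 2 = (Z - z1) / 2 := by
    rw [hvdef]
    split_ifs
    · exact Real.sq_sqrt (by linarith only [hz1le.2])
    · rw [neg_sq]; exact Real.sq_sqrt (by linarith only [hz1le.2])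
  have huv : 2 * (u * v) = z2 := by
    have habs : (2 * (u * v)) ^ 2 = z2 ^ 2 := by
      linear_combination 4 * v ^ 2 * hu2 + 2 * (Z + z1) * hv2 + hZsq
    by_cases hzs : 0 ≤ z2
    · have hvv : v = vA := by rw [hvdef, if_pos hzs]
      have huvn : 0 ≤ 2 * (u * v) := by rw [hvv]; positivity
      rcases mul_self_eq_mul_self_iff.mp (by linear_combination habs :
          (2 * (u * v)) * (2 * (u * v)) = z2 * z2) with h | h
      · exact h
      · linarith only [h, huvn, hzs]
    · push_neg at hzs
      have hvv : v = -vA := by rw [hvdef, if_neg (not_le.mpr hzs)]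
      have huvn : 2 * (u * v) ≤ 0 := by
        rw [hvv]
        linarith only [mul_nonneg hu0 hvA0]
      rcases mul_self_eq_mul_self_iff.mp (by linear_combination habs :
          (2 * (u * v)) * (2 * (u * v)) = z2 * z2) with h | h
      · exact h
      · linarith only [h, huvn, hzs]
  -- the "b" quantities
  set b1 := Real.sqrt (a1 ^ 2 + 2 * (Z + z1)) with hb1def
  set b2 := Real.sqrt (a2 ^ 2 + (Z - z2)) with hb2def
  set b3 := Real.sqrt (a3 ^ 2 + (Z + z2)) with hb3def
  have hsumb : b1 + b2 + b3 = 1 := hκeq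
  have hb1sq : b1 ^ 2 = a1 ^ 2 + 2 * (Z + z1) :=
    Real.sq_sqrt (by linarith only [sq_nonneg a1, hz1le.1])
  have hb2sq : b2 ^ 2 = a2 ^ 2 + (Z - z2) :=
    Real.sq_sqrt (by linarith only [sq_nonneg a2, hz2le.2])
  have hb3sq : b3 ^ 2 = a3 ^ 2 + (Z + z2) :=
    Real.sq_sqrt (by linarith only [sq_nonneg a3, hz2le.1])
  have hb10 : 0 ≤ b1 := Real.sqrt_nonneg _
  have hb20 : 0 ≤ b2 := Real.sqrt_nonneg _
  have hb30 : 0 ≤ b3 := Real.sqrt_nonneg _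
  have hb1a : |a1| ≤ b1 := by
    rw [← Real.sqrt_sq_eq_abs, hb1def]
    exact Real.sqrt_le_sqrt (by linarith only [hz1le.1])
  have hb2a : |a2| ≤ b2 := by
    rw [← Real.sqrt_sq_eq_abs, hb2def]
    exact Real.sqrt_le_sqrt (by linarith only [hz2le.2])
  have hb3a : |a3| ≤ b3 := by
    rw [← Real.sqrt_sq_eq_abs, hb3def]
    exact Real.sqrt_le_sqrt (by linarith only [hz2le.1])
  have hb1a' := abs_le.mp hb1a
  have hb2a' := abs_le.mp hb2a
  have hb3a' := abs_le.mp hb3a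
  -- the coordinates
  set w0 := Real.sqrt ((b1 + a1) / 2) with hw0def
  set w5v := Real.sqrt ((b1 - a1) / 2) with hw5def
  set w1 := Real.sqrt ((b2 + a2) / 2) with hw1def
  set s2 : ℝ := if 0 ≤ u - v then 1 else -1 with hs2def
  set w4v := s2 * Real.sqrt ((b2 - a2) / 2) with hw4def
  set w2 := Real.sqrt ((b3 + a3) / 2) with hw2def
  set s3 : ℝ := if 0 ≤ -(u + v) then 1 else -1 with hs3def
  set w3v := s3 * Real.sqrt ((b3 - a3) / 2) with hw3def
  have hw0sq : w0 ^ 2 = (b1 + a1) / 2 := Real.sq_sqrt (by linarith only [hb1a'.1])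
  have hw5sq : w5v ^ 2 = (b1 - a1) / 2 := Real.sq_sqrt (by linarith only [hb1a'.2])
  have hw1sq : w1 ^ 2 = (b2 + a2) / 2 := Real.sq_sqrt (by linarith only [hb2a'.1])
  have hw2sq : w2 ^ 2 = (b3 + a3) / 2 := Real.sq_sqrt (by linarith only [hb3a'.1])
  have hs2sq : s2 ^ 2 = 1 := by rw [hs2def]; split_ifs <;> norm_num
  have hs3sq : s3 ^ 2 = 1 := by rw [hs3def]; split_ifs <;> norm_num
  have hw4sq : w4v ^ 2 = (b2 - a2) / 2 := by
    rw [hw4def, mul_pow, hs2sq, one_mul]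
    exact Real.sq_sqrt (by linarith only [hb2a'.2])
  have hw3sq : w3v ^ 2 = (b3 - a3) / 2 := by
    rw [hw3def, mul_pow, hs3sq, one_mul]
    exact Real.sq_sqrt (by linarith only [hb3a'.2])
  -- products
  have hprod1 : w0 * w5v = u := by
    rw [hw0def, hw5def, ← Real.sqrt_mul (by linarith only [hb1a'.1])]
    rw [hudef]
    congr 1
    linear_combination hb1sq / 4
  have hprod2 : w1 * w4v = (u - v) / 2 := by
    have harg : ((b2 + a2) / 2) * ((b2 - a2) / 2) = ((u - v) / 2) ^ 2 := by
      linear_combination hb2sq / 4 - hu2 / 4 - hv2 / 4 + huv / 4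
    have habs2 : w1 * Real.sqrt ((b2 - a2) / 2) = |(u - v) / 2| := by
      rw [hw1def, ← Real.sqrt_mul (by linarith only [hb2a'.1]), harg, Real.sqrt_sq_eq_abs]
    rw [hw4def, show w1 * (s2 * Real.sqrt ((b2 - a2) / 2)) =
      s2 * (w1 * Real.sqrt ((b2 - a2) / 2)) from by ring, habs2, hs2def]
    split_ifs with h
    · rw [abs_of_nonneg (by linarith only [h]), one_mul]
    · push_neg at h
      rw [abs_of_neg (by linarith only [h])]
      ring
  have hprod3 : w2 * w3v = -(u + v) / 2 := by
    have harg : ((b3 + a3) / 2) * ((b3 - a3) / 2) = ((u + v) / 2) ^ 2 := by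
      linear_combination hb3sq / 4 - hu2 / 4 - hv2 / 4 - huv / 4
    have habs3' : w2 * Real.sqrt ((b3 - a3) / 2) = |(u + v) / 2| := by
      rw [hw2def, ← Real.sqrt_mul (by linarith only [hb3a'.1]), harg, Real.sqrt_sq_eq_abs]
    rw [hw3def, show w2 * (s3 * Real.sqrt ((b3 - a3) / 2)) =
      s3 * (w2 * Real.sqrt ((b3 - a3) / 2)) from by ring, habs3', hs3def]
    split_ifs with h
    · rw [abs_of_nonpos (by linarith only [h]), one_mul]
      ring
    · push_neg at h
      rw [abs_of_pos (by linarith only [h])]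
      ring
  -- assemble the vector
  refine ⟨![w0, w1, w2, w3v, w4v, w5v], κ, hκpos, ?_, ?_, ?_⟩
  · show w0 * w5v + w2 * w3v = w1 * w4v
    rw [hprod1, hprod2, hprod3]
    ring
  · show w0 ^ 2 + w1 ^ 2 + w2 ^ 2 + w3v ^ 2 + w4v ^ 2 + w5v ^ 2 = 1
    rw [hw0sq, hw1sq, hw2sq, hw3sq, hw4sq, hw5sq]
    linarith only [hsumb]
  · have hr2v : r2 (![w0, w1, w2, w3v, w4v, w5v]) = 1 := by
      show w0 ^ 2 + w1 ^ 2 + w2 ^ 2 + w3v ^ 2 + w4v ^ 2 + w5v ^ 2 = 1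
      rw [hw0sq, hw1sq, hw2sq, hw3sq, hw4sq, hw5sq]
      linarith only [hsumb]
    have huuv : uu (![w0, w1, w2, w3v, w4v, w5v]) = u := hprod1
    have hvvv : vv (![w0, w1, w2, w3v, w4v, w5v]) = v := by
      show -(w1 * w4v + w2 * w3v) = v
      rw [hprod2, hprod3]
      ring
    intro i
    fin_cases i
    · show phi (![w0, w1, w2, w3v, w4v, w5v]) 0 = κ * α 0
      rw [phi_apply0, hr2v, one_mul, ← ha1def]
      show w0 ^ 2 - w5v ^ 2 = a1
      rw [hw0sq, hw5sq]
      ring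
    · show phi (![w0, w1, w2, w3v, w4v, w5v]) 1 = κ * α 1
      rw [phi_apply1, hr2v, one_mul, ← ha2def]
      show w1 ^ 2 - w4v ^ 2 = a2
      rw [hw1sq, hw4sq]
      ring
    · show phi (![w0, w1, w2, w3v, w4v, w5v]) 2 = κ * α 2
      rw [phi_apply2, hr2v, one_mul, ← ha3def]
      show w2 ^ 2 - w3v ^ 2 = a3
      rw [hw2sq, hw3sq]
      ring
    · show phi (![w0, w1, w2, w3v, w4v, w5v]) 3 = κ * α 3
      rw [phi_apply3, huuv, hvvv, ← hz1def, hu2, hv2]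
      ring
    · show phi (![w0, w1, w2, w3v, w4v, w5v]) 4 = κ * α 4
      rw [phi_apply4, huuv, hvvv, ← hz2def, huv]

/-! ### Topological assembly -/

/-- the invariant map, normalized to be scale-invariant -/
noncomputable def gfun (w : {w : Fin 6 → ℝ // w ≠ 0}) : Fin 5 → ℝ :=
  ((r2 w.1) ^ 2)⁻¹ • phi w.1

lemma gfun_wd (a b : {w : Fin 6 → ℝ // w ≠ 0}) (h : projRelR a b) : gfun a = gfun b := by
  obtain ⟨c, hc, hcw⟩ := h
  have hr0 : r2 a.1 ≠ 0 := ne_of_gt (r2_pos a.1 a.2)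
  funext i
  have h1 : r2 b.1 = c ^ 2 * r2 a.1 := by rw [← hcw]; exact r2_smul c a.1
  have h2 : phi b.1 i = c ^ 4 * phi a.1 i := by rw [← hcw]; exact phi_smul c a.1 i
  simp only [gfun, Pi.smul_apply, smul_eq_mul]
  rw [h1, h2]
  field_simp

/-- the induced map `ℝP⁵ → ℝ⁵` -/
noncomputable def FE : RP5 → EuclideanSpace ℝ (Fin 5) :=
  fun p => (WithLp.equiv 2 (Fin 5 → ℝ)).symm (Quot.lift gfun gfun_wd p)

lemma continuous_phi : Continuous fun w : Fin 6 → ℝ => phi w := by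
  apply continuous_pi
  intro i
  fin_cases i
  · show Continuous fun w : Fin 6 → ℝ => phi w 0
    simp only [phi_apply0, r2]
    fun_prop
  · show Continuous fun w : Fin 6 → ℝ => phi w 1
    simp only [phi_apply1, r2]
    fun_prop
  · show Continuous fun w : Fin 6 → ℝ => phi w 2
    simp only [phi_apply2, r2]
    fun_prop
  · show Continuous fun w : Fin 6 → ℝ => phi w 3
    simp only [phi_apply3, uu, vv]
    fun_prop
  · show Continuous fun w : Fin 6 → ℝ => phi w 4
    simp only [phi_apply4, uu, vv]
    fun_prop

lemma continuous_gfun : Continuous gfun := by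
  have hr2c : Continuous fun w : Fin 6 → ℝ => r2 w := by
    simp only [r2]; fun_prop
  refine Continuous.smul (f := fun w : {w : Fin 6 → ℝ // w ≠ 0} => ((r2 w.1) ^ 2)⁻¹)
    (g := fun w => phi w.1) ?_ ?_
  · exact Continuous.inv₀ (((hr2c.comp continuous_subtype_val)).pow 2)
      (fun w => pow_ne_zero 2 (ne_of_gt (r2_pos w.1 w.2)))
  · exact continuous_phi.comp continuous_subtype_val

lemma continuous_FE : Continuous FE := by
  apply (PiLp.continuous_toLp 2 (fun _ : Fin 5 => ℝ)).comp
  exact isQuotientMap_quot_mk.continuous_iff.mpr continuous_gfun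

lemma FE_ne_zero (P : ↥realPluckerQuadric) : FE P.1 ≠ 0 := by
  obtain ⟨w, hw, hq⟩ := P.2
  rw [← hw]
  intro h
  have h' : gfun w = 0 := by
    have := congrArg (⇑(WithLp.equiv 2 (Fin 5 → ℝ))) h
    simpa [FE] using this
  have hphi0 : phi w.1 = 0 := by
    funext i
    have h0 := congrFun h' i
    simp only [gfun, Pi.smul_apply, smul_eq_mul, Pi.zero_apply] at h0 ⊢
    rcases mul_eq_zero.mp h0 with h'' | h''
    · exact absurd h'' (inv_ne_zero (pow_ne_zero 2 (ne_of_gt (r2_pos _ w.2))))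
    · exact h''
  exact phi_ne_zero w.2 hq hphi0

/-- the map to the sphere -/
noncomputable def psiS (P : ↥realPluckerQuadric) :
    Metric.sphere (0 : EuclideanSpace ℝ (Fin 5)) 1 :=
  ⟨‖FE P.1‖⁻¹ • FE P.1, by
    rw [mem_sphere_zero_iff_norm, norm_smul, norm_inv, norm_norm]
    exact inv_mul_cancel₀ (norm_ne_zero_iff.mpr (FE_ne_zero P))⟩

lemma psiS_wd (P Q : ↥realPluckerQuadric) (h : realOrbitRel P Q) : psiS P = psiS Q := by
  obtain ⟨ε, hε, w, w', hw, hw', hk⟩ := h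
  have hfun : w'.1 = fun k => signCoef ε k * w.1 k := funext hk
  have hgf : gfun w' = gfun w := by
    funext i
    simp only [gfun, Pi.smul_apply, smul_eq_mul]
    rw [hfun, r2_sign ε w.1 (fun j => cases_sq (hε j)), phi_sign ε w.1 hε i]
  have hFE : FE P.1 = FE Q.1 := by
    rw [← hw, ← hw']
    show (WithLp.equiv 2 (Fin 5 → ℝ)).symm (gfun w) = (WithLp.equiv 2 (Fin 5 → ℝ)).symm (gfun w')
    rw [hgf]
  apply Subtype.ext
  show ‖FE P.1‖⁻¹ • FE P.1 = ‖FE Q.1‖⁻¹ • FE Q.1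
  rw [hFE]

/-- the induced map on the orbit space -/
noncomputable def Psi : Quot realOrbitRel → Metric.sphere (0 : EuclideanSpace ℝ (Fin 5)) 1 :=
  Quot.lift psiS psiS_wd

lemma continuous_Psi : Continuous Psi := by
  apply isQuotientMap_quot_mk.continuous_iff.mpr
  show Continuous psiS
  apply Continuous.subtype_mk
  have hFEc : Continuous fun P : ↥realPluckerQuadric => FE P.1 :=
    continuous_FE.comp continuous_subtype_val
  exact (hFEc.norm.inv₀ (fun P => norm_ne_zero_iff.mpr (FE_ne_zero P))).smul hFEc

/-- normalization of representatives -/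
lemma normalize (w : {w : Fin 6 → ℝ // w ≠ 0}) :
    ∃ n : {w : Fin 6 → ℝ // w ≠ 0}, r2 n.1 = 1 ∧
      Quot.mk projRelR n = Quot.mk projRelR w ∧
      (Quad w.1 → Quad n.1) := by
  have hpos := r2_pos w.1 w.2
  have hs : Real.sqrt (r2 w.1) ≠ 0 := ne_of_gt (Real.sqrt_pos.mpr hpos)
  have hr2n : r2 (fun k => (Real.sqrt (r2 w.1))⁻¹ * w.1 k) = 1 := by
    rw [r2_smul, inv_pow, Real.sq_sqrt (le_of_lt hpos)]
    exact inv_mul_cancel₀ (ne_of_gt hpos)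
  have hne : (fun k => (Real.sqrt (r2 w.1))⁻¹ * w.1 k) ≠ (0 : Fin 6 → ℝ) := by
    intro h0
    rw [h0] at hr2n
    norm_num [r2] at hr2n
  refine ⟨⟨_, hne⟩, hr2n, ?_, ?_⟩
  · exact Quot.sound ⟨Real.sqrt (r2 w.1), hs, by funext k; field_simp⟩
  · intro hq
    exact quad_smul hq

lemma Psi_inj : Function.Injective Psi := by
  intro p q h
  obtain ⟨P, rfl⟩ := Quot.exists_rep p
  obtain ⟨Q, rfl⟩ := Quot.exists_rep q
  have h' : ‖FE P.1‖⁻¹ • FE P.1 = ‖FE Q.1‖⁻¹ • FE Q.1 := congrArg Subtype.val h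
  obtain ⟨w, hw, hqw⟩ := P.2
  obtain ⟨w', hw', hqw'⟩ := Q.2
  obtain ⟨n, hr2n, hmkn, hquadn⟩ := normalize w
  obtain ⟨n', hr2n', hmkn', hquadn'⟩ := normalize w'
  have hPmk : Quot.mk projRelR n = P.1 := by rw [hmkn, hw]
  have hQmk : Quot.mk projRelR n' = Q.1 := by rw [hmkn', hw']
  have hgn : gfun n = phi n.1 := by
    funext i
    simp only [gfun, Pi.smul_apply, smul_eq_mul, hr2n]
    norm_num
  have hgn' : gfun n' = phi n'.1 := by
    funext i
    simp only [gfun, Pi.smul_apply, smul_eq_mul, hr2n']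
    norm_num
  have hFEP : FE P.1 = (WithLp.equiv 2 (Fin 5 → ℝ)).symm (phi n.1) := by
    rw [← hPmk]
    show (WithLp.equiv 2 (Fin 5 → ℝ)).symm (gfun n) = _
    rw [hgn]
  have hFEQ : FE Q.1 = (WithLp.equiv 2 (Fin 5 → ℝ)).symm (phi n'.1) := by
    rw [← hQmk]
    show (WithLp.equiv 2 (Fin 5 → ℝ)).symm (gfun n') = _
    rw [hgn']
  have hnP : ‖FE P.1‖ ≠ 0 := norm_ne_zero_iff.mpr (FE_ne_zero P)
  have hnQ : ‖FE Q.1‖ ≠ 0 := norm_ne_zero_iff.mpr (FE_ne_zero Q)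
  set κv := ‖FE P.1‖ * ‖FE Q.1‖⁻¹ with hκdef
  have h2 : FE P.1 = κv • FE Q.1 := by
    calc FE P.1 = ‖FE P.1‖ • (‖FE P.1‖⁻¹ • FE P.1) := by
          rw [smul_smul, mul_inv_cancel₀ hnP, one_smul]
      _ = ‖FE P.1‖ • (‖FE Q.1‖⁻¹ • FE Q.1) := by rw [h']
      _ = κv • FE Q.1 := by rw [smul_smul, ← hκdef]
  have hκpos : 0 < κv := by
    rw [hκdef]
    apply mul_pos
    · exact lt_of_le_of_ne (norm_nonneg _) (Ne.symm hnP)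
    · exact inv_pos.mpr (lt_of_le_of_ne (norm_nonneg _) (Ne.symm hnQ))
  have h2' : (WithLp.equiv 2 (Fin 5 → ℝ)).symm (phi n.1) =
      κv • (WithLp.equiv 2 (Fin 5 → ℝ)).symm (phi n'.1) := by
    rw [← hFEP, ← hFEQ]
    exact h2
  have h4 : phi n.1 = κv • phi n'.1 := by
    have h3 := congrArg (⇑(WithLp.equiv 2 (Fin 5 → ℝ))) h2'
    simpa [WithLp.ofLp_smul] using h3
  have hphi : ∀ i, phi n.1 i = κv * phi n'.1 i := by
    intro i
    have := congrFun h4 i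
    simpa [Pi.smul_apply, smul_eq_mul] using this
  obtain ⟨ε, hε, c, hc, hrel⟩ :=
    orbit_exists n.1 n'.1 (hquadn hqw) (hquadn' hqw') hr2n hr2n' κv hκpos hphi
  apply Quot.sound
  have hW'ne : (fun k => signCoef ε k * n.1 k) ≠ (0 : Fin 6 → ℝ) := by
    intro h0
    apply n'.2
    funext k
    rw [hrel k, congrFun h0 k]
    simp
  refine ⟨ε, hε, n, ⟨fun k => signCoef ε k * n.1 k, hW'ne⟩, hPmk, ?_, fun k => rfl⟩
  rw [← hQmk]
  exact Quot.sound ⟨c, hc, by funext k; exact (hrel k).symm⟩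

lemma Psi_surj : Function.Surjective Psi := by
  intro x
  have hx : ‖(x : EuclideanSpace ℝ (Fin 5))‖ = 1 := mem_sphere_zero_iff_norm.mp x.2
  have hα : ((x : EuclideanSpace ℝ (Fin 5)) 0) ^ 2 + ((x : EuclideanSpace ℝ (Fin 5)) 1) ^ 2 +
      ((x : EuclideanSpace ℝ (Fin 5)) 2) ^ 2 + ((x : EuclideanSpace ℝ (Fin 5)) 3) ^ 2 +
      ((x : EuclideanSpace ℝ (Fin 5)) 4) ^ 2 = 1 := by
    have h1 : Real.sqrt (∑ i, ‖(x : EuclideanSpace ℝ (Fin 5)) i‖ ^ 2) = 1 := by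
      rw [← EuclideanSpace.norm_eq]
      exact hx
    have hnn : (0 : ℝ) ≤ ∑ i, ‖(x : EuclideanSpace ℝ (Fin 5)) i‖ ^ 2 := by positivity
    have h2 : (∑ i, ‖(x : EuclideanSpace ℝ (Fin 5)) i‖ ^ 2) = 1 := by
      calc (∑ i, ‖(x : EuclideanSpace ℝ (Fin 5)) i‖ ^ 2)
          = Real.sqrt (∑ i, ‖(x : EuclideanSpace ℝ (Fin 5)) i‖ ^ 2) ^ 2 :=
            (Real.sq_sqrt hnn).symm
        _ = 1 := by rw [h1]; norm_num
    rw [Fin.sum_univ_five] at h2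
    simpa [Real.norm_eq_abs, sq_abs] using h2
  obtain ⟨w, κ, hκpos, hquad, hr2w, hphiw⟩ :=
    surj_construct (fun i => (x : EuclideanSpace ℝ (Fin 5)) i) hα
  have hwne : w ≠ 0 := by
    intro h0
    rw [h0] at hr2w
    norm_num [r2] at hr2w
  refine ⟨Quot.mk _ ⟨Quot.mk projRelR ⟨w, hwne⟩, ⟨⟨w, hwne⟩, rfl, hquad⟩⟩, ?_⟩
  show psiS _ = x
  apply Subtype.ext
  show ‖FE (Quot.mk projRelR ⟨w, hwne⟩)‖⁻¹ • FE (Quot.mk projRelR ⟨w, hwne⟩) =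
    (x : EuclideanSpace ℝ (Fin 5))
  have hFE : FE (Quot.mk projRelR ⟨w, hwne⟩) = κ • (x : EuclideanSpace ℝ (Fin 5)) := by
    show (WithLp.equiv 2 (Fin 5 → ℝ)).symm (gfun ⟨w, hwne⟩) = _
    have hg : gfun ⟨w, hwne⟩ = fun i => κ * (x : EuclideanSpace ℝ (Fin 5)) i := by
      funext i
      simp only [gfun, Pi.smul_apply, smul_eq_mul]
      rw [hr2w, hphiw i]
      norm_num
    rw [hg, Equiv.symm_apply_eq]
    funext i
    exact rfl
  rw [hFE, norm_smul, hx, mul_one, Real.norm_eq_abs, abs_of_pos hκpos, smul_smul,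
    inv_mul_cancel₀ (ne_of_gt hκpos), one_smul]

lemma compact_quadric : IsCompact realPluckerQuadric := by
  have hKc : IsCompact {w : Fin 6 → ℝ | r2 w = 1 ∧ w 0 * w 5 + w 2 * w 3 = w 1 * w 4} := by
    apply Metric.isCompact_of_isClosed_isBounded
    · rw [Set.setOf_and]
      apply IsClosed.inter
      · exact isClosed_eq (by unfold r2; fun_prop) continuous_const
      · exact isClosed_eq (by fun_prop) (by fun_prop)
    · rw [Metric.isBounded_iff_subset_closedBall 0]
      refine ⟨1, fun w hw => ?_⟩
      rw [Metric.mem_closedBall, dist_zero_right]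
      have hsq : ∀ k : Fin 6, w k ^ 2 ≤ 1 := by
        have h1 := hw.1
        unfold r2 at h1
        have q0 : w 0 ^ 2 ≤ 1 := by
          linarith only [h1, sq_nonneg (w 1), sq_nonneg (w 2), sq_nonneg (w 3),
            sq_nonneg (w 4), sq_nonneg (w 5)]
        have q1 : w 1 ^ 2 ≤ 1 := by
          linarith only [h1, sq_nonneg (w 0), sq_nonneg (w 2), sq_nonneg (w 3),
            sq_nonneg (w 4), sq_nonneg (w 5)]
        have q2 : w 2 ^ 2 ≤ 1 := by
          linarith only [h1, sq_nonneg (w 0), sq_nonneg (w 1), sq_nonneg (w 3),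
            sq_nonneg (w 4), sq_nonneg (w 5)]
        have q3 : w 3 ^ 2 ≤ 1 := by
          linarith only [h1, sq_nonneg (w 0), sq_nonneg (w 1), sq_nonneg (w 2),
            sq_nonneg (w 4), sq_nonneg (w 5)]
        have q4 : w 4 ^ 2 ≤ 1 := by
          linarith only [h1, sq_nonneg (w 0), sq_nonneg (w 1), sq_nonneg (w 2),
            sq_nonneg (w 3), sq_nonneg (w 5)]
        have q5 : w 5 ^ 2 ≤ 1 := by
          linarith only [h1, sq_nonneg (w 0), sq_nonneg (w 1), sq_nonneg (w 2),
            sq_nonneg (w 3), sq_nonneg (w 4)]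
        intro k
        fin_cases k
        · exact q0
        · exact q1
        · exact q2
        · exact q3
        · exact q4
        · exact q5
      apply pi_norm_le_iff_of_nonneg (by norm_num) |>.mpr
      intro k
      rw [Real.norm_eq_abs, ← Real.sqrt_sq_eq_abs]
      calc Real.sqrt (w k ^ 2) ≤ Real.sqrt 1 := Real.sqrt_le_sqrt (hsq k)
        _ = 1 := Real.sqrt_one
  have hsub : {w : Fin 6 → ℝ | r2 w = 1 ∧ w 0 * w 5 + w 2 * w 3 = w 1 * w 4} ⊆
      {w : Fin 6 → ℝ | w ≠ 0} := by
    intro w hw h0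
    rw [h0] at hw
    have := hw.1
    norm_num [r2] at this
  have hpre : IsCompact (Subtype.val ⁻¹'
      {w : Fin 6 → ℝ | r2 w = 1 ∧ w 0 * w 5 + w 2 * w 3 = w 1 * w 4} :
      Set {w : Fin 6 → ℝ // w ≠ 0}) := by
    rw [Topology.IsEmbedding.subtypeVal.isCompact_iff, Set.image_preimage_eq_inter_range,
      Subtype.range_val_subtype]
    show IsCompact ({w : Fin 6 → ℝ | r2 w = 1 ∧ w 0 * w 5 + w 2 * w 3 = w 1 * w 4} ∩
      {w : Fin 6 → ℝ | w ≠ 0})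
    rw [Set.inter_eq_left.mpr hsub]
    exact hKc
  have himg : realPluckerQuadric = (Quot.mk projRelR) '' (Subtype.val ⁻¹'
      {w : Fin 6 → ℝ | r2 w = 1 ∧ w 0 * w 5 + w 2 * w 3 = w 1 * w 4}) := by
    ext p
    constructor
    · rintro ⟨w, hw, hq⟩
      obtain ⟨n, hr2n, hmkn, hquadn⟩ := normalize w
      exact ⟨n, ⟨hr2n, hquadn hq⟩, by rw [hmkn, hw]⟩
    · rintro ⟨w, hwK, rfl⟩
      exact ⟨w, rfl, hwK.2⟩
  rw [himg]
  exact hpre.image continuous_quot_mk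

end RG

end

set_option maxHeartbeats 1000000 in
/-- the orbit space `G₄,₂(ℝ)/ℤ₂⁴` is homeomorphic to the sphere `S⁴`,
the unit sphere of `ℝ⁵`. -/
theorem realOrbitSpace_homeomorph_sphere :
    Nonempty (Quot realOrbitRel ≃ₜ Metric.sphere (0 : EuclideanSpace ℝ (Fin 5)) 1) := by
  haveI hcq : CompactSpace ↥realPluckerQuadric :=
    isCompact_iff_compactSpace.mp RG.compact_quadric
  haveI : CompactSpace (Quot realOrbitRel) := by
    constructor
    have h : (Set.univ : Set (Quot realOrbitRel)) = Set.range (Quot.mk realOrbitRel) :=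
      (Set.range_eq_univ.mpr Quot.mk_surjective).symm
    rw [h]
    exact isCompact_range continuous_quot_mk
  exact ⟨Continuous.homeoOfEquivCompactToT2
    (f := Equiv.ofBijective RG.Psi ⟨RG.Psi_inj, RG.Psi_surj⟩) RG.continuous_Psi⟩
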